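/- Let k ≥ 1 and let a ∈ ℂ^k be a unit vector. Then for every real ε with 0 ≤ ε ≤ 1/2, the matrix P_sym^{k,2} − ε·(a a^*) ⊗ (a a^*) ∈ M_k(ℂ) ⊗ M_k(ℂ) ≅ M_{k²}(ℂ) is separable. -/

import Mathlib

open Matrix Finset
open scoped Kronecker

/-- The flipOp operator on ℂ^k ⊗ ℂ^k. -/
noncomputable def flipOp (k : ℕ) : Matrix (Fin k × Fin k) (Fin k × Fin k) ℂ :=
  Matrix.of fun p q => if p.1 = q.2 ∧ p.2 = q.1 then 1 else 0

/-- Orthogonal projection onto the symmetric subspace of ℂ^k ⊗ ℂ^k. -/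
noncomputable def psym (k : ℕ) : Matrix (Fin k × Fin k) (Fin k × Fin k) ℂ :=
  (1 / 2 : ℂ) • (1 + flipOp k)

/-- Separability of a matrix in M_k(ℂ) ⊗ M_k(ℂ) ≅ M_{k²}(ℂ). -/
def Separable {k : ℕ} (δ : Matrix (Fin k × Fin k) (Fin k × Fin k) ℂ) : Prop :=
  ∃ (N : ℕ) (x y : Fin N → Fin k → ℂ),
    δ = ∑ i, (Matrix.vecMulVec (x i) (star (x i))) ⊗ₖ (Matrix.vecMulVec (y i) (star (y i)))

/-! ### Auxiliary material: a primitive cube root of unity and character sums -/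

noncomputable def pwAux : ℂ := (-1 + Real.sqrt 3 * Complex.I) / 2

lemma sqrt3_sq_aux : (Real.sqrt 3 : ℂ) * (Real.sqrt 3 : ℂ) = 3 := by
  rw [← Complex.ofReal_mul, Real.mul_self_sqrt (by norm_num : (0:ℝ) ≤ 3)]
  norm_num

lemma pwAux_cube : pwAux ^ 3 = 1 := by
  unfold pwAux
  linear_combination ((3 - (Real.sqrt 3:ℂ)*Complex.I)/8) * sqrt3_sq_aux
    + ((-3*((Real.sqrt 3:ℂ))^2 + ((Real.sqrt 3:ℂ))^3*Complex.I)/8) * Complex.I_sq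

lemma pwAux_sum : 1 + pwAux + pwAux ^ 2 = 0 := by
  unfold pwAux
  linear_combination (-1/4 : ℂ) * sqrt3_sq_aux + (((Real.sqrt 3:ℂ))^2/4) * Complex.I_sq

lemma pwAux_mul_conj : pwAux * (starRingEnd ℂ) pwAux = 1 := by
  rw [Complex.mul_conj]
  have h1 : pwAux.re = -1/2 := by simp [pwAux]
  have h2 : pwAux.im = Real.sqrt 3 / 2 := by simp [pwAux]
  rw [Complex.normSq_apply, h1, h2]
  have : Real.sqrt 3 * Real.sqrt 3 = 3 := Real.mul_self_sqrt (by norm_num)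
  have h3 : (-1 / 2 * (-1 / 2) + Real.sqrt 3 / 2 * (Real.sqrt 3 / 2) : ℝ) = 1 := by
    nlinarith [this]
  rw [h3]
  norm_num

lemma pwAux_ne_zero : pwAux ≠ 0 := by
  intro h
  have := pwAux_cube
  rw [h] at this
  simp at this

noncomputable def zetaAux (z : ZMod 3) : ℂ := pwAux ^ z.val

lemma pwAux_pow_mod (n : ℕ) : pwAux ^ (n % 3) = pwAux ^ n := by
  conv_rhs => rw [← Nat.mod_add_div n 3]
  rw [pow_add, pow_mul, pwAux_cube, one_pow, mul_one]

lemma zetaAux_zero : zetaAux 0 = 1 := by simp [zetaAux]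

lemma zetaAux_add (x y : ZMod 3) : zetaAux (x + y) = zetaAux x * zetaAux y := by
  unfold zetaAux
  rw [ZMod.val_add, pwAux_pow_mod, pow_add]

lemma zetaAux_ne_zero (z : ZMod 3) : zetaAux z ≠ 0 := pow_ne_zero _ pwAux_ne_zero

lemma conj_zetaAux (z : ZMod 3) : (starRingEnd ℂ) (zetaAux z) = zetaAux (-z) := by
  have h1 : zetaAux z * zetaAux (-z) = 1 := by rw [← zetaAux_add]; simp [zetaAux_zero]
  have h2 : zetaAux z * (starRingEnd ℂ) (zetaAux z) = 1 := by
    unfold zetaAux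
    rw [map_pow, ← mul_pow, pwAux_mul_conj, one_pow]
  exact mul_left_cancel₀ (zetaAux_ne_zero z) (h2.trans h1.symm)

lemma zetaAux_one : zetaAux 1 = pwAux := by
  simp [zetaAux, ZMod.val]
  exact pow_one _

lemma zetaAux_two : zetaAux 2 = pwAux ^ 2 := by
  rw [show (2 : ZMod 3) = 1 + 1 by decide, zetaAux_add, zetaAux_one, sq]

lemma zetaAux_geom (c : ZMod 3) :
    ∑ z : ZMod 3, zetaAux (c * z) = if c = 0 then 3 else 0 := by
  have huniv : (Finset.univ : Finset (ZMod 3)) = {0, 1, 2} := by decide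
  rw [huniv, show ({0,1,2} : Finset (ZMod 3)) = insert 0 (insert 1 {2}) from rfl,
    Finset.sum_insert (by decide), Finset.sum_insert (by decide), Finset.sum_singleton]
  rcases (by decide : ∀ c : ZMod 3, c = 0 ∨ c = 1 ∨ c = 2) c with rfl | rfl | rfl
  · norm_num [zetaAux_zero]
  · rw [if_neg (by decide), show ((1 : ZMod 3) * 0) = 0 by decide,
      show ((1 : ZMod 3) * 1) = 1 by decide, show ((1 : ZMod 3) * 2) = 2 by decide,
      zetaAux_zero, zetaAux_one, zetaAux_two]
    linear_combination pwAux_sum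
  · rw [if_neg (by decide), show ((2 : ZMod 3) * 0) = 0 by decide,
      show ((2 : ZMod 3) * 1) = 2 by decide, show ((2 : ZMod 3) * 2) = 1 by decide,
      zetaAux_zero, zetaAux_one, zetaAux_two]
    linear_combination pwAux_sum

lemma zetaAux_sum_eq_prod {ι : Type*} [DecidableEq ι] (s : Finset ι) (f : ι → ZMod 3) :
    zetaAux (∑ i ∈ s, f i) = ∏ i ∈ s, zetaAux (f i) := by
  induction s using Finset.induction_on with
  | empty => simpa using zetaAux_zero
  | insert _ _ h ih => rw [Finset.sum_insert h, Finset.prod_insert h, zetaAux_add, ih]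

lemma indicator_forall_iff_aux {k : ℕ} (m n u v : Fin k) :
    (∀ i : Fin k, (if m = i then (1:ℤ) else 0) + (if n = i then 1 else 0)
        - (if u = i then 1 else 0) - (if v = i then 1 else 0) = 0)
      ↔ ((m = u ∧ n = v) ∨ (m = v ∧ n = u)) := by
  constructor
  · intro h
    have hm := h m; have hn := h n; have hu := h u; have hv := h v
    by_cases h1 : m = n <;> by_cases h2 : m = u <;> by_cases h3 : m = v <;>
      by_cases h4 : n = u <;> by_cases h5 : n = v <;> by_cases h6 : u = v <;>
      simp_all
  · rintro (⟨rfl, rfl⟩ | ⟨rfl, rfl⟩) i <;> ring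

lemma char_sum_aux {k : ℕ} (m n u v : Fin k) :
    ∑ g : Fin k → ZMod 3, zetaAux (g m + g n - g u - g v)
      = (3:ℂ)^k * ((if m = u then 1 else 0) * (if n = v then 1 else 0)
          + (if m = v then 1 else 0) * (if n = u then 1 else 0)
          - (if m = u then 1 else 0) * (if n = v then 1 else 0) * (if m = v then 1 else 0)) := by
  classical
  set cz : Fin k → ℤ := fun i => (if m = i then (1:ℤ) else 0) + (if n = i then 1 else 0)
      - (if u = i then 1 else 0) - (if v = i then 1 else 0) with hcz
  have key : ∀ g : Fin k → ZMod 3, g m + g n - g u - g v = ∑ i, ((cz i : ZMod 3)) * g i := by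
    intro g
    simp only [hcz]
    push_cast
    simp [add_mul, sub_mul, ite_mul, one_mul, zero_mul, Finset.sum_add_distrib,
      Finset.sum_sub_distrib, Finset.sum_ite_eq, Finset.mem_univ]
  have step2 : ∑ g : Fin k → ZMod 3, zetaAux (g m + g n - g u - g v)
      = ∏ i, ∑ z : ZMod 3, zetaAux ((cz i : ZMod 3) * z) := by
    rw [Fintype.prod_sum]
    exact Finset.sum_congr rfl fun g _ => by rw [key g, zetaAux_sum_eq_prod]
  have hcond : ∀ i, (((cz i : ℤ) : ZMod 3) = 0) ↔ cz i = 0 := by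
    intro i
    rw [ZMod.intCast_zmod_eq_zero_iff_dvd]
    simp only [hcz]
    split_ifs <;> omega
  rw [step2]
  by_cases hall : ∀ i, cz i = 0
  · have h1 : ∀ i, ∑ z : ZMod 3, zetaAux ((cz i : ZMod 3) * z) = 3 := by
      intro i
      rw [zetaAux_geom, if_pos ((hcond i).mpr (hall i))]
    rw [Finset.prod_congr rfl fun i _ => h1 i, Finset.prod_const, Finset.card_univ,
      Fintype.card_fin]
    rcases (indicator_forall_iff_aux m n u v).mp hall with ⟨rfl, rfl⟩ | ⟨rfl, rfl⟩ <;>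
      by_cases hmn : m = n <;> simp [hmn, eq_comm]
  · push_neg at hall
    obtain ⟨i, hi⟩ := hall
    have h0 : ∑ z : ZMod 3, zetaAux ((cz i : ZMod 3) * z) = 0 := by
      rw [zetaAux_geom, if_neg (fun h => hi ((hcond i).mp h))]
    rw [Finset.prod_eq_zero (Finset.mem_univ i) h0]
    have hnd : ¬ ((m = u ∧ n = v) ∨ (m = v ∧ n = u)) := by
      intro h
      exact (fun h2 => absurd ((indicator_forall_iff_aux m n u v).mpr h)
        (by push_neg; exact ⟨i, h2⟩)) hi
    push_neg at hnd
    obtain ⟨hd1, hd2⟩ := hnd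
    by_cases h2 : m = u <;> by_cases h3 : n = v <;> by_cases h4 : m = v <;> by_cases h5 : n = u <;>
      simp_all

lemma expand_g_aux {k : ℕ} (B : Fin k → Fin k → ℂ) (g : Fin k → ZMod 3) (i j p q : Fin k) :
    (∑ m, zetaAux (g m) * B m i) * (starRingEnd ℂ) (∑ m, zetaAux (g m) * B m p)
        * ((∑ m, zetaAux (g m) * B m j) * (starRingEnd ℂ) (∑ m, zetaAux (g m) * B m q))
    = ∑ v, ∑ n, ∑ u, ∑ m, zetaAux (g m + g n - g u - g v)
        * (B m i * B n j * (starRingEnd ℂ) (B u p) * (starRingEnd ℂ) (B v q)) := by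
  simp only [map_sum, _root_.map_mul, conj_zetaAux, Finset.sum_mul, Finset.mul_sum]
  refine Finset.sum_congr rfl fun v _ => Finset.sum_congr rfl fun n _ =>
    Finset.sum_congr rfl fun u _ => Finset.sum_congr rfl fun m _ => ?_
  have hz : zetaAux (g m) * zetaAux (g n) * zetaAux (-g u) * zetaAux (-g v)
      = zetaAux (g m + g n - g u - g v) := by
    rw [← zetaAux_add, ← zetaAux_add, ← zetaAux_add]
    congr 1
    abel
  linear_combination
    (B m i * B n j * (starRingEnd ℂ) (B u p) * (starRingEnd ℂ) (B v q)) * hz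

lemma phi_moment_aux {k : ℕ} (B : Fin k → Fin k → ℂ)
    (hComp : ∀ i p : Fin k, ∑ m, B m i * (starRingEnd ℂ) (B m p) = if i = p then 1 else 0)
    (i j p q : Fin k) :
    ∑ g : Fin k → ZMod 3,
      (∑ m, zetaAux (g m) * B m i) * (starRingEnd ℂ) (∑ m, zetaAux (g m) * B m p)
        * ((∑ m, zetaAux (g m) * B m j) * (starRingEnd ℂ) (∑ m, zetaAux (g m) * B m q))
    = (3:ℂ)^k * ((if i = p then 1 else 0) * (if j = q then 1 else 0)
        + (if i = q then 1 else 0) * (if j = p then 1 else 0)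
        - ∑ m, B m i * B m j * (starRingEnd ℂ) (B m p) * (starRingEnd ℂ) (B m q)) := by
  classical
  have h1 : ∑ g : Fin k → ZMod 3,
      (∑ m, zetaAux (g m) * B m i) * (starRingEnd ℂ) (∑ m, zetaAux (g m) * B m p)
        * ((∑ m, zetaAux (g m) * B m j) * (starRingEnd ℂ) (∑ m, zetaAux (g m) * B m q))
      = ∑ v, ∑ n, ∑ u, ∑ m, (∑ g : Fin k → ZMod 3, zetaAux (g m + g n - g u - g v))
          * (B m i * B n j * (starRingEnd ℂ) (B u p) * (starRingEnd ℂ) (B v q)) := by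
    rw [Finset.sum_congr rfl fun g _ => expand_g_aux B g i j p q, Finset.sum_comm]
    refine Finset.sum_congr rfl fun v _ => ?_
    rw [Finset.sum_comm]
    refine Finset.sum_congr rfl fun n _ => ?_
    rw [Finset.sum_comm]
    refine Finset.sum_congr rfl fun u _ => ?_
    rw [Finset.sum_comm]
    refine Finset.sum_congr rfl fun m _ => ?_
    rw [Finset.sum_mul]
  rw [h1]
  have h2 : ∀ v n u m : Fin k, (∑ g : Fin k → ZMod 3, zetaAux (g m + g n - g u - g v))
          * (B m i * B n j * (starRingEnd ℂ) (B u p) * (starRingEnd ℂ) (B v q))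
      = (3:ℂ)^k * (((if m = u then 1 else 0) * (if n = v then 1 else 0)
          + (if m = v then 1 else 0) * (if n = u then 1 else 0)
          - (if m = u then 1 else 0) * (if n = v then 1 else 0) * (if m = v then 1 else 0))
          * (B m i * B n j * (starRingEnd ℂ) (B u p) * (starRingEnd ℂ) (B v q))) := by
    intro v n u m
    rw [char_sum_aux]
    ring
  simp only [h2, ← Finset.mul_sum]
  congr 1
  simp only [add_mul, sub_mul, mul_assoc]
  simp only [Finset.sum_add_distrib, Finset.sum_sub_distrib]
  simp only [ite_mul, mul_ite, mul_zero, zero_mul, mul_one, one_mul, Finset.sum_ite_eq,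
    Finset.sum_ite_eq', Finset.sum_ite_irrel, Finset.sum_const_zero, Finset.mem_univ, if_true]
  have e1 : (∑ x : Fin k, ∑ x_1 : Fin k,
        B x_1 i * (B x j * ((starRingEnd ℂ) (B x_1 p) * (starRingEnd ℂ) (B x q))))
      = (∑ m, B m i * (starRingEnd ℂ) (B m p)) * (∑ m, B m j * (starRingEnd ℂ) (B m q)) := by
    rw [Finset.sum_mul_sum, Finset.sum_comm]
    exact Finset.sum_congr rfl fun x _ => Finset.sum_congr rfl fun y _ => by ring
  have e2 : (∑ x : Fin k, ∑ x_1 : Fin k,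
        B x i * (B x_1 j * ((starRingEnd ℂ) (B x_1 p) * (starRingEnd ℂ) (B x q))))
      = (∑ m, B m i * (starRingEnd ℂ) (B m q)) * (∑ m, B m j * (starRingEnd ℂ) (B m p)) := by
    rw [Finset.sum_mul_sum]
    exact Finset.sum_congr rfl fun x _ => Finset.sum_congr rfl fun y _ => by ring
  rw [e1, e2, hComp i p, hComp j q, hComp i q, hComp j p]
  congr 1
  split_ifs <;> ring

lemma separable_of_fintype {k : ℕ} {ι : Type} [Fintype ι] (x y : ι → Fin k → ℂ)
    {δ : Matrix (Fin k × Fin k) (Fin k × Fin k) ℂ}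
    (h : δ = ∑ i, (Matrix.vecMulVec (x i) (star (x i))) ⊗ₖ
        (Matrix.vecMulVec (y i) (star (y i)))) :
    Separable δ := by
  classical
  let e := Fintype.equivFin ι
  refine ⟨Fintype.card ι, fun n => x (e.symm n), fun n => y (e.symm n), ?_⟩
  rw [h]
  exact (Equiv.sum_comp e.symm fun i =>
    (Matrix.vecMulVec (x i) (star (x i))) ⊗ₖ (Matrix.vecMulVec (y i) (star (y i)))).symm

theorem psym_minus_product_separable (k : ℕ) (hk : 1 ≤ k) (a : Fin k → ℂ)
    (ha : ∑ i, Complex.normSq (a i) = 1) (ε : ℝ) (hε0 : 0 ≤ ε) (hε : ε ≤ 1 / 2) :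
    Separable (psym k - (ε : ℂ) •
      ((Matrix.vecMulVec a (star a)) ⊗ₖ (Matrix.vecMulVec a (star a)))) := by
  classical
  haveI : NeZero k := ⟨by omega⟩
  -- Build an orthonormal basis extending `a`.
  set A : EuclideanSpace ℂ (Fin k) := WithLp.toLp 2 a with hA
  have hAA : (inner ℂ A A : ℂ) = 1 := by
    rw [PiLp.inner_apply]
    simp only [RCLike.inner_apply']
    have : ∀ i, (starRingEnd ℂ) (A i) * A i = (Complex.normSq (a i) : ℂ) := by
      intro i
      rw [← Complex.normSq_eq_conj_mul_self]
    rw [Finset.sum_congr rfl fun i _ => this i]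
    push_cast
    exact_mod_cast congrArg (Complex.ofReal) ha
  have hOrthA : Orthonormal ℂ (Set.restrict {(0 : Fin k)} (fun _ : Fin k => A)) := by
    rw [orthonormal_iff_ite]
    rintro ⟨i, hi⟩ ⟨j, hj⟩
    have hi' : i = 0 := hi
    have hj' : j = 0 := hj
    rw [if_pos (Subtype.ext (hi'.trans hj'.symm))]
    exact hAA
  obtain ⟨b, hb⟩ := Orthonormal.exists_orthonormalBasis_extension_of_card_eq
      (𝕜 := ℂ) (by simp) hOrthA
  set B : Fin k → Fin k → ℂ := fun m j => b m j with hBdef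
  have hB0 : ∀ j, B 0 j = A j := by
    intro j
    have h0 := hb 0 (Set.mem_singleton 0)
    simp only [hBdef]
    rw [h0]
  have hRow : ∀ m m', ∑ j, (starRingEnd ℂ) (B m j) * B m' j = if m = m' then 1 else 0 := by
    intro m m'
    have h := orthonormal_iff_ite.mp b.orthonormal m m'
    rw [PiLp.inner_apply] at h
    simp [RCLike.inner_apply] at h
    refine Eq.trans ?_ h
    exact Finset.sum_congr rfl fun j _ => mul_comm _ _
  have hU : (Matrix.of B) * (Matrix.of B)ᴴ = 1 := by
    ext m m'
    rw [Matrix.mul_apply, Matrix.one_apply]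
    simp only [Matrix.conjTranspose_apply, Matrix.of_apply]
    have : ∑ j, B m j * star (B m' j)
        = (starRingEnd ℂ) (∑ j, (starRingEnd ℂ) (B m j) * B m' j) := by
      rw [map_sum]
      exact Finset.sum_congr rfl fun j _ => by
        simp [Complex.star_def, mul_comm]
    rw [this, hRow m m']
    split_ifs <;> simp
  have hU' : (Matrix.of B)ᴴ * (Matrix.of B) = 1 := mul_eq_one_comm.mp hU
  have hComp : ∀ i p : Fin k, ∑ m, B m i * (starRingEnd ℂ) (B m p)
      = if i = p then 1 else 0 := by
    intro i p
    have h2 : ((Matrix.of B)ᴴ * (Matrix.of B)) p i = (1 : Matrix (Fin k) (Fin k) ℂ) p i := by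
      rw [hU']
    rw [Matrix.mul_apply, Matrix.one_apply] at h2
    simp only [Matrix.conjTranspose_apply, Matrix.of_apply] at h2
    have h3 : ∑ m, B m i * (starRingEnd ℂ) (B m p) = ∑ x, star (B x p) * B x i :=
      Finset.sum_congr rfl fun m _ => by rw [mul_comm]; rfl
    rw [h3, h2]
    by_cases hip : i = p
    · simp [hip]
    · rw [if_neg (fun h => hip h.symm), if_neg hip]
  -- coefficients
  have hc1 : ∀ m : Fin k, (0:ℝ) ≤ (if m = 0 then 1/2 - ε else 1/2) := by
    intro m; split_ifs <;> linarith
  have hr : (0:ℝ) ≤ 1 / (2 * 3^k) := by positivity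
  refine separable_of_fintype (ι := Fin k ⊕ (Fin k → ZMod 3))
    (Sum.elim (fun m j => (Real.sqrt (if m = 0 then 1/2 - ε else 1/2) : ℂ) * B m j)
              (fun g j => (Real.sqrt (1 / (2 * 3^k)) : ℂ) * ∑ m, zetaAux (g m) * B m j))
    (Sum.elim (fun m j => B m j)
              (fun g j => ∑ m, zetaAux (g m) * B m j)) ?_
  ext ⟨i, j⟩ ⟨p, q⟩
  simp only [Matrix.sub_apply, Matrix.smul_apply, psym, flipOp, Matrix.add_apply,
    Matrix.one_apply, Matrix.of_apply, Matrix.kroneckerMap_apply, Matrix.vecMulVec_apply,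
    Pi.star_apply, Matrix.sum_apply, Fintype.sum_sum_type, Sum.elim_inl, Sum.elim_inr,
    smul_eq_mul, Complex.star_def]
  have hsum1 : ∑ x : Fin k,
        (Real.sqrt (if x = 0 then 1/2 - ε else 1/2) : ℂ) * B x i *
            (starRingEnd ℂ) ((Real.sqrt (if x = 0 then 1/2 - ε else 1/2) : ℂ) * B x p) *
          (B x j * (starRingEnd ℂ) (B x q))
      = (1/2 : ℂ) * (∑ m, B m i * B m j * (starRingEnd ℂ) (B m p) * (starRingEnd ℂ) (B m q))
        - (ε : ℂ) * (A i * A j * (starRingEnd ℂ) (A p) * (starRingEnd ℂ) (A q)) := by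
    have hterm : ∀ m : Fin k,
        (Real.sqrt (if m = 0 then 1/2 - ε else 1/2) : ℂ) * B m i *
            (starRingEnd ℂ) ((Real.sqrt (if m = 0 then 1/2 - ε else 1/2) : ℂ) * B m p) *
          (B m j * (starRingEnd ℂ) (B m q))
        = ((1/2 : ℂ) + (if m = 0 then (-(ε:ℂ)) else 0))
            * (B m i * B m j * (starRingEnd ℂ) (B m p) * (starRingEnd ℂ) (B m q)) := by
      intro m
      have h4 : ((Real.sqrt (if m = 0 then 1/2 - ε else 1/2)) : ℂ)
          * ((Real.sqrt (if m = 0 then 1/2 - ε else 1/2)) : ℂ)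
          = (1/2 : ℂ) + (if m = 0 then (-(ε:ℂ)) else 0) := by
        rw [← Complex.ofReal_mul, Real.mul_self_sqrt (hc1 m)]
        split_ifs <;> push_cast <;> ring
      rw [_root_.map_mul, Complex.conj_ofReal]
      linear_combination
        (B m i * (starRingEnd ℂ) (B m p) * B m j * (starRingEnd ℂ) (B m q)) * h4
    rw [Finset.sum_congr rfl fun m _ => hterm m]
    simp only [add_mul, Finset.sum_add_distrib, ite_mul, zero_mul, neg_mul,
      Finset.sum_ite_eq', Finset.mem_univ, if_true, ← Finset.mul_sum]
    rw [hB0 i, hB0 j, hB0 p, hB0 q]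
    ring
  have hsum2 : ∑ g : Fin k → ZMod 3,
        ((Real.sqrt (1 / (2 * 3^k)) : ℂ) * ∑ m, zetaAux (g m) * B m i) *
            (starRingEnd ℂ) ((Real.sqrt (1 / (2 * 3^k)) : ℂ) * ∑ m, zetaAux (g m) * B m p) *
          ((∑ m, zetaAux (g m) * B m j) * (starRingEnd ℂ) (∑ m, zetaAux (g m) * B m q))
      = (1/2 : ℂ) * ((if i = p then 1 else 0) * (if j = q then 1 else 0)
          + (if i = q then 1 else 0) * (if j = p then 1 else 0)
          - ∑ m, B m i * B m j * (starRingEnd ℂ) (B m p) * (starRingEnd ℂ) (B m q)) := by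
    have h5 : ((Real.sqrt (1 / (2 * 3^k))) : ℂ) * ((Real.sqrt (1 / (2 * 3^k))) : ℂ)
        = ((1 / (2 * 3^k) : ℝ) : ℂ) := by
      rw [← Complex.ofReal_mul, Real.mul_self_sqrt hr]
    have hterm : ∀ g : Fin k → ZMod 3,
        ((Real.sqrt (1 / (2 * 3^k)) : ℂ) * ∑ m, zetaAux (g m) * B m i) *
            (starRingEnd ℂ) ((Real.sqrt (1 / (2 * 3^k)) : ℂ) * ∑ m, zetaAux (g m) * B m p) *
          ((∑ m, zetaAux (g m) * B m j) * (starRingEnd ℂ) (∑ m, zetaAux (g m) * B m q))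
        = ((1 / (2 * 3^k) : ℝ) : ℂ) * ((∑ m, zetaAux (g m) * B m i) *
            (starRingEnd ℂ) (∑ m, zetaAux (g m) * B m p) *
            ((∑ m, zetaAux (g m) * B m j) * (starRingEnd ℂ) (∑ m, zetaAux (g m) * B m q))) := by
      intro g
      rw [_root_.map_mul, Complex.conj_ofReal]
      linear_combination ((∑ m, zetaAux (g m) * B m i) *
        (starRingEnd ℂ) (∑ m, zetaAux (g m) * B m p) *
        ((∑ m, zetaAux (g m) * B m j) * (starRingEnd ℂ) (∑ m, zetaAux (g m) * B m q))) * h5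
    rw [Finset.sum_congr rfl fun g _ => hterm g, ← Finset.mul_sum,
      phi_moment_aux B hComp i j p q]
    have h6 : ((1 / (2 * 3^k) : ℝ) : ℂ) * (3:ℂ)^k = 1/2 := by
      have h7 : ((3:ℝ)^k : ℂ) = (3:ℂ)^k := by push_cast; ring
      have h8 : (3:ℂ)^k ≠ 0 := pow_ne_zero _ (by norm_num)
      push_cast
      field_simp
    rw [← mul_assoc, h6]
  rw [hsum1, hsum2]
  have hpair : (if ((i, j) : Fin k × Fin k) = (p, q) then (1:ℂ) else 0)
      = (if i = p then 1 else 0) * (if j = q then 1 else 0) := by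
    simp only [Prod.mk.injEq]
    by_cases h1 : i = p <;> by_cases h2 : j = q <;> simp [h1, h2]
  have hand : (if i = q ∧ j = p then (1:ℂ) else 0)
      = (if i = q then 1 else 0) * (if j = p then 1 else 0) := by
    by_cases h1 : i = q <;> by_cases h2 : j = p <;> simp [h1, h2]
  rw [hpair, hand]
  ring
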